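/- The box category □ is thick: for every map f ∈ □, in the unique factorization f = φ∘ψ with φ ∈ □ and ψ cotransverse of equal source and target dimension, the map ψ is the identity (and in particular ψ ∈ □). -/

import Mathlib

open scoped ENNReal

open Classical in
noncomputable def dCube {n : ℕ} (x y : Fin n → Bool) : ℝ≥0∞ :=
  if x ≤ y then ((Finset.univ.filter fun i => x i ≠ y i).card : ℝ≥0∞) else ⊤

/-- Maps between binary cubes. -/
abbrev CubeMap (m n : ℕ) := (Fin m → Bool) → (Fin n → Bool)

/-- Cotransverse maps: strictly increasing poset maps preserving `d̄₁`-distance `1`. -/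
def Cotransverse {m n : ℕ} (f : CubeMap m n) : Prop :=
  StrictMono f ∧ ∀ x y, dCube x y = 1 → dCube (f x) (f y) = 1

/-- Membership in the box category `□`: composites of coface maps. -/
inductive IsBox : ∀ {m n : ℕ}, CubeMap m n → Prop
  | id (n : ℕ) : IsBox (@id (Fin n → Bool))
  | coface {n : ℕ} (i : Fin (n + 1)) (a : Bool) :
      IsBox (fun x : Fin n → Bool => (i.insertNth a x : Fin (n + 1) → Bool))
  | comp {m n p : ℕ} {f : CubeMap m n} {g : CubeMap n p} :
      IsBox f → IsBox g → IsBox (g ∘ f)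

/-- Structure theorem for box maps: there is a strictly monotone reindexing `u` such that
the `u i`-th output coordinate is the `i`-th input coordinate, and all other output
coordinates are constant. -/
lemma isBox_form {m n : ℕ} {f : CubeMap m n} (hf : IsBox f) :
    ∃ u : Fin m → Fin n, StrictMono u ∧ (∀ x k, f x (u k) = x k) ∧
      ∀ x y j, (∀ k, u k ≠ j) → f x j = f y j := by
  induction hf with
  | id n =>
    exact ⟨id, strictMono_id, fun x k => rfl, fun x y j h => absurd rfl (h j)⟩
  | coface i a =>
    refine ⟨i.succAbove, Fin.strictMono_succAbove i,
      fun x k => by simp [Fin.insertNth_apply_succAbove], fun x y j h => ?_⟩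
    have hj : j = i := by
      by_contra hne
      obtain ⟨k, hk⟩ := Fin.exists_succAbove_eq hne
      exact h k hk
    subst hj
    simp [Fin.insertNth_apply_same]
  | comp hf hg ihf ihg =>
    obtain ⟨u, hu, h1, h2⟩ := ihf
    obtain ⟨v, hv, g1, g2⟩ := ihg
    refine ⟨v ∘ u, hv.comp hu, fun x k => by simp [Function.comp, g1, h1], fun x y j h => ?_⟩
    by_cases hj : ∃ k', v k' = j
    · obtain ⟨k', hk'⟩ := hj
      subst hk'
      simp only [Function.comp_apply, g1]
      exact h2 x y k' fun k hk => h k (by simp [Function.comp, hk])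
    · exact g2 _ _ j fun k hk => hj ⟨k, hk⟩

/-- The box category is thick: for `f ∈ □`, in any factorization `f = φ ∘ ψ`
with `φ ∈ □` and `ψ` a cotransverse endomap, `ψ` is the identity. -/
theorem stmt13 {m n : ℕ} (f : CubeMap m n) (ψ : CubeMap m m) (φ : CubeMap m n)
    (hf : IsBox f) (hψ : Cotransverse ψ) (hφ : IsBox φ) (hfac : f = φ ∘ ψ) :
    ψ = id := by
  obtain ⟨u, hu, h1, h2⟩ := isBox_form hf
  obtain ⟨v, hv, g1, g2⟩ := isBox_form hφ
  -- ψ x i = f x (v i)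
  have key : ∀ x i, ψ x i = f x (v i) := by
    intro x i
    have : f x = φ (ψ x) := by rw [hfac]; rfl
    rw [this, g1]
  -- basis vectors
  set e : Fin m → (Fin m → Bool) := fun j k => decide (k = j) with he
  have hbot_le : ∀ j, (fun _ => false : Fin m → Bool) ≤ e j := fun j k => by
    cases h : e j k <;> simp [Bool.le_iff_imp]
  have hd1 : ∀ j : Fin m, dCube (fun _ => false) (e j) = 1 := by
    intro j
    rw [dCube, if_pos (hbot_le j)]
    have : (Finset.univ.filter fun k => (fun _ => false : Fin m → Bool) k ≠ e j k) = {j} := by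
      ext k
      simp [he, eq_comm]
    rw [this]
    simp
  -- for each j, the set of i with v i = u j has exactly one element
  have hcard : ∀ j : Fin m, ∃! i : Fin m, v i = u j := by
    intro j
    have hd := hψ.2 _ _ (hd1 j)
    rw [dCube] at hd
    split_ifs at hd with hle
    · have hset : (Finset.univ.filter fun i => ψ (fun _ => false) i ≠ ψ (e j) i)
          = Finset.univ.filter fun i => v i = u j := by
        ext i
        simp only [Finset.mem_filter, Finset.mem_univ, true_and]
        rw [key, key]
        constructor
        · intro hne
          by_contra hvu
          by_cases hex : ∃ k, u k = v i
          · obtain ⟨k, hk⟩ := hex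
            rw [← hk, h1, h1] at hne
            have : k = j := by
              simp only [he] at hne
              by_contra hkj
              simp [hkj] at hne
            exact hvu (hk ▸ this ▸ rfl)
          · exact hne (h2 _ _ _ fun k hk => hex ⟨k, hk⟩)
        · intro hvu
          rw [hvu, h1, h1]
          simp [he]
      rw [hset] at hd
      have : (Finset.univ.filter fun i => v i = u j).card = 1 := by
        exact_mod_cast hd
      obtain ⟨a, ha⟩ := Finset.card_eq_one.1 this
      refine ⟨a, ?_, ?_⟩
      · have : a ∈ Finset.univ.filter fun i => v i = u j := ha ▸ Finset.mem_singleton_self a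
        simpa using this
      · intro b hb
        have : b ∈ Finset.univ.filter fun i => v i = u j := by simpa using hb
        rw [ha] at this
        simpa using this
    · exact absurd hd (by simp)
  -- the map j ↦ i_j is injective, hence surjective
  choose ρ hρ hρu using hcard
  have hρinj : Function.Injective ρ := by
    intro a b hab
    exact hu.injective (by rw [← hρ a, ← hρ b, hab])
  have hρsurj : Function.Surjective ρ := Finite.surjective_of_injective hρinj
  -- hence every v i is of the form u (τ i)
  have hvi : ∀ i, ∃ j, v i = u j := by
    intro i
    obtain ⟨j, hj⟩ := hρsurj i
    exact ⟨j, hj ▸ hρ j⟩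
  choose τ hτ using hvi
  have hτmono : StrictMono τ := by
    intro a b hab
    have : u (τ a) < u (τ b) := by rw [← hτ, ← hτ]; exact hv hab
    exact hu.lt_iff_lt.1 this
  have hτid : τ = id := by
    have hτsurj : Function.Surjective τ := by
      intro j
      refine ⟨ρ j, ?_⟩
      have : u (τ (ρ j)) = u j := by rw [← hτ]; exact hρ j
      exact hu.injective this
    have : Set.range τ = Set.range (id : Fin m → Fin m) := by
      rw [Set.range_id]; exact Set.range_eq_univ.2 hτsurj
    exact (hτmono.range_inj strictMono_id).1 this
  funext x
  funext i
  rw [key, hτ, h1]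
  have : τ i = i := congrFun hτid i
  rw [this]
  rfl
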